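/- Let w, y, g be vectors in EuclideanSpace ℝ (Fin d) with ⟪w, y⟫ > 0, ⟪w, g⟫ = 0, y + g ≠ 0 and ‖y + g‖ < ‖y‖. Then the probability (under P) that a noise vector η satisfies ⟪w + η, y + g⟫ > 0 is strictly greater than the probability that ⟪w + η, y⟫ > 0. That is, translating the query y by the orthogonal vector g, which strictly decreases its norm, strictly increases the probability that the sign of its inner product with the noisy direction w + η is preserved. -/

import Mathlib

/-!
STATEMENT 0: Let `P` be the product of `d` i.i.d. real Gaussians `gaussianReal 0 s²` on
`Fin d → ℝ` (the isotropic Gaussian on `EuclideanSpace ℝ (Fin d)` with covariance `s² I`).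
For `w, y, g` with `⟪w, y⟫ > 0`, `⟪w, g⟫ = 0`, `y + g ≠ 0` and `‖y + g‖ < ‖y‖`, the
probability that `⟪w + η, y + g⟫ > 0` is strictly greater than the probability that
`⟪w + η, y⟫ > 0`.
-/

open MeasureTheory ProbabilityTheory RealInnerProductSpace
open scoped NNReal

open scoped ENNReal

namespace GapAux

lemma lintegral_fin_prod (μ : Measure ℝ) [SigmaFinite μ] :
    ∀ {n : ℕ} (f : Fin n → ℝ → ℝ≥0∞), (∀ i, Measurable (f i)) →
    ∫⁻ x : Fin n → ℝ, ∏ i, f i (x i) ∂(Measure.pi fun _ => μ) = ∏ i, ∫⁻ x, f i x ∂μ := by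
  intro n
  induction n with
  | zero =>
      intro f hf
      simp [lintegral_const, Measure.pi_empty_univ]
  | succ n ih =>
      intro f hf
      have hmp := (measurePreserving_piFinSuccAbove (fun _ : Fin (n+1) => μ) 0).symm
      have hFm : Measurable fun x : Fin (n+1) → ℝ => ∏ i, f i (x i) :=
        Finset.measurable_prod _ fun i _ => (hf i).comp (measurable_pi_apply i)
      rw [← hmp.lintegral_comp hFm]
      simp_rw [MeasurableEquiv.piFinSuccAbove_symm_apply, Fin.insertNthEquiv,
        Fin.prod_univ_succ, Fin.insertNth_zero]
      simp only [Fin.zero_succAbove, Function.comp_def, Fin.cons_zero, Fin.cons_succ, cast_eq,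
        Equiv.coe_fn_mk]
      rw [lintegral_prod_mul (f := f 0) (g := fun b : Fin n → ℝ => ∏ i, f i.succ (b i))
        (hf 0).aemeasurable
        (Finset.measurable_prod _ fun i _ => (hf i.succ).comp (measurable_pi_apply i)).aemeasurable]
      rw [ih (fun i => f i.succ) (fun i => hf i.succ)]


lemma pi_map_eval {d : ℕ} (μ : Measure ℝ) [IsProbabilityMeasure μ] (i : Fin d) :
    (Measure.pi fun _ : Fin d => μ).map (fun x => x i) = μ := by
  ext t ht
  rw [Measure.map_apply (measurable_pi_apply i) ht]
  have hpre : (fun x : Fin d → ℝ => x i) ⁻¹' t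
      = Set.pi Set.univ (Function.update (fun _ : Fin d => (Set.univ : Set ℝ)) i t) := by
    ext x
    simp only [Set.mem_preimage, Set.mem_pi, Set.mem_univ, forall_true_left]
    constructor
    · intro hx j
      by_cases hj : j = i
      · subst hj; simpa using hx
      · simp [Function.update_of_ne hj]
    · intro hx
      simpa using hx i
  rw [hpre, Measure.pi_pi]
  rw [Finset.prod_eq_single i (fun j _ hj => by simp [Function.update_of_ne hj])
    (fun h => absurd (Finset.mem_univ i) h)]
  simp

lemma pi_gaussian_eq {d : ℕ} (v : ℝ≥0) (hv : v ≠ 0) :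
    (Measure.pi fun _ : Fin d => gaussianReal 0 v) =
      (volume : Measure (Fin d → ℝ)).withDensity fun x => ∏ i, gaussianPDF 0 v (x i) := by
  refine Measure.pi_eq fun t ht => ?_
  rw [withDensity_apply _ (MeasurableSet.univ_pi ht)]
  have hind : ∀ x : Fin d → ℝ,
      (Set.univ.pi t).indicator (fun x : Fin d → ℝ => ∏ i, gaussianPDF 0 v (x i)) x
        = ∏ i, (t i).indicator (gaussianPDF 0 v) (x i) := by
    intro x
    by_cases hx : x ∈ Set.univ.pi t
    · rw [Set.indicator_of_mem hx]
      refine Finset.prod_congr rfl fun i _ => ?_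
      rw [Set.indicator_of_mem (hx i (Set.mem_univ i))]
    · rw [Set.indicator_of_notMem hx]
      rw [Set.mem_pi] at hx
      push_neg at hx
      obtain ⟨i, -, hi⟩ := hx
      exact (Finset.prod_eq_zero (Finset.mem_univ i) (by rw [Set.indicator_of_notMem hi])).symm
  rw [← lintegral_indicator (MeasurableSet.univ_pi ht)]
  simp_rw [hind]
  rw [volume_pi, lintegral_fin_prod volume _
    (fun i => (measurable_gaussianPDF 0 v).indicator (ht i))]
  refine Finset.prod_congr rfl fun i _ => ?_
  rw [lintegral_indicator (ht i), gaussianReal_apply 0 hv]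


noncomputable def F (d : ℕ) (v : ℝ≥0) (t : ℝ) : ℝ≥0∞ :=
  ENNReal.ofReal ((Real.sqrt (2 * Real.pi * v))⁻¹ ^ d * Real.exp (-t / (2 * v)))

lemma prod_gaussianPDF {d : ℕ} (v : ℝ≥0) (x : Fin d → ℝ) :
    ∏ i, gaussianPDF 0 v (x i) = F d v (∑ i, (x i) ^ 2) := by
  unfold F gaussianPDF gaussianPDFReal
  rw [← ENNReal.ofReal_prod_of_nonneg (fun i _ =>
    mul_nonneg (inv_nonneg.2 (Real.sqrt_nonneg _)) (Real.exp_pos _).le)]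
  congr 1
  rw [Finset.prod_mul_distrib, Finset.prod_const, Finset.card_univ, Fintype.card_fin,
    ← Real.exp_sum]
  congr 1
  simp only [sub_zero, neg_div, Finset.sum_neg_distrib, Finset.sum_div]


lemma map_withDensity_equiv {α β : Type*} [MeasurableSpace α] [MeasurableSpace β]
    (e : α ≃ᵐ β) (μ : Measure α) {f : α → ℝ≥0∞} (hf : Measurable f) :
    (μ.withDensity f).map e = (μ.map e).withDensity (f ∘ e.symm) := by
  ext t ht
  rw [Measure.map_apply e.measurable ht, withDensity_apply _ (e.measurable ht),
    withDensity_apply _ ht,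
    setLIntegral_map ht (hf.comp e.symm.measurable) e.measurable]
  refine setLIntegral_congr_fun (e.measurable ht) (fun x _ => ?_)
  simp

lemma sum_sq_eq_norm_sq {d : ℕ} (z : EuclideanSpace ℝ (Fin d)) :
    ∑ i, z i ^ 2 = ‖z‖ ^ 2 := by
  rw [← real_inner_self_eq_norm_sq]
  simp only [PiLp.inner_apply, RCLike.inner_apply, conj_trivial, sq]

lemma map_inner_gaussian {d : ℕ} (hd : 0 < d) (v : ℝ≥0) (hv : v ≠ 0)
    (u : EuclideanSpace ℝ (Fin d)) (hu : ‖u‖ = 1) :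
    (Measure.pi fun _ : Fin d => gaussianReal 0 v).map
      (fun η : Fin d → ℝ => ⟪(MeasurableEquiv.toLp 2 (Fin d → ℝ)).symm.symm η, u⟫) =
      gaussianReal 0 v := by
  classical
  set i0 : Fin d := ⟨0, hd⟩
  set mE := (MeasurableEquiv.toLp 2 (Fin d → ℝ)).symm.symm with hmE
  set P := (Measure.pi fun _ : Fin d => gaussianReal 0 v) with hPdef
  have hon : Orthonormal ℝ (({i0} : Set (Fin d)).restrict (fun _ => u)) := by
    constructor
    · intro i; simpa [Set.restrict] using hu
    · intro i j hij
      exact absurd (Subtype.ext (i.2.trans j.2.symm)) hij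
  obtain ⟨b, hb⟩ := hon.exists_orthonormalBasis_extension_of_card_eq
    (by simp)
  have hbu : b i0 = u := hb i0 rfl
  have key : ∀ x : EuclideanSpace ℝ (Fin d), (⟪x, u⟫ : ℝ) = b.repr x i0 := by
    intro x
    rw [real_inner_comm, ← hbu, ← b.repr_apply_apply]
  set eT : EuclideanSpace ℝ (Fin d) ≃ᵐ EuclideanSpace ℝ (Fin d) :=
    b.repr.toHomeomorph.toMeasurableEquiv with heT
  have heT_coe : (eT : EuclideanSpace ℝ (Fin d) → EuclideanSpace ℝ (Fin d)) = ⇑b.repr := rfl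
  have hFc : Continuous fun t : ℝ =>
      ((Real.sqrt (2 * Real.pi * v))⁻¹ ^ d * Real.exp (-t / (2 * v))) := by
    fun_prop
  have hFm : Measurable (F d v) := ENNReal.measurable_ofReal.comp hFc.measurable
  have hsum : Measurable fun x : Fin d → ℝ => ∑ i, x i ^ 2 :=
    Finset.measurable_sum _ fun i _ => ((measurable_pi_apply i).pow_const 2)
  have hdens : Measurable fun x : Fin d → ℝ => F d v (∑ i, x i ^ 2) := hFm.comp hsum
  set h : EuclideanSpace ℝ (Fin d) → ℝ≥0∞ := fun z => F d v (‖z‖ ^ 2) with hh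
  have hvolE : (volume : Measure (Fin d → ℝ)).map mE = volume :=
    ((EuclideanSpace.volume_preserving_symm_measurableEquiv_toLp (Fin d)).symm _).map_eq
  have hP1 : P.map mE = (volume : Measure (EuclideanSpace ℝ (Fin d))).withDensity h := by
    rw [hPdef, pi_gaussian_eq v hv]
    have hfe : (fun x : Fin d → ℝ => ∏ i, gaussianPDF 0 v (x i))
        = fun x => F d v (∑ i, x i ^ 2) := funext fun x => prod_gaussianPDF v x
    rw [hfe, map_withDensity_equiv mE _ hdens, hvolE]
    congr 1
    funext z
    show F d v (∑ i, (mE.symm z) i ^ 2) = F d v (‖z‖ ^ 2)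
    exact congrArg (F d v) (sum_sq_eq_norm_sq z)
  have hmeas_h : Measurable h := by
    have hc : Continuous fun z : EuclideanSpace ℝ (Fin d) => ‖z‖ ^ 2 := by fun_prop
    exact hFm.comp hc.measurable
  have hvolT : (volume : Measure (EuclideanSpace ℝ (Fin d))).map eT = volume := by
    rw [show (⇑eT : EuclideanSpace ℝ (Fin d) → EuclideanSpace ℝ (Fin d)) = ⇑b.repr from rfl]
    exact b.repr.measurePreserving.map_eq
  have hP2 : (P.map mE).map eT = P.map mE := by
    rw [hP1, map_withDensity_equiv eT _ hmeas_h, hvolT]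
    congr 1
    funext z
    show F d v (‖eT.symm z‖ ^ 2) = F d v (‖z‖ ^ 2)
    rw [show (eT.symm z : EuclideanSpace ℝ (Fin d)) = b.repr.symm z from rfl,
      b.repr.symm.norm_map]
  have hev : Measurable fun z : EuclideanSpace ℝ (Fin d) => z i0 :=
    (measurable_pi_apply i0).comp (MeasurableEquiv.toLp 2 (Fin d → ℝ)).symm.measurable
  have hcomp : (fun η : Fin d → ℝ => (⟪mE η, u⟫ : ℝ))
      = (fun z : EuclideanSpace ℝ (Fin d) => z i0) ∘ (⇑eT ∘ ⇑mE) :=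
    funext fun η => key (mE η)
  rw [show (fun η : Fin d → ℝ =>
      (⟪(MeasurableEquiv.toLp 2 (Fin d → ℝ)).symm.symm η, u⟫ : ℝ)) =
      (fun η : Fin d → ℝ => (⟪mE η, u⟫ : ℝ)) from rfl, hcomp,
    ← Measure.map_map hev (eT.measurable.comp mE.measurable),
    ← Measure.map_map eT.measurable mE.measurable, hP2,
    Measure.map_map hev mE.measurable]
  rw [show ((fun z : EuclideanSpace ℝ (Fin d) => z i0) ∘ ⇑mE)
      = fun η : Fin d → ℝ => η i0 from rfl]
  exact pi_map_eval (gaussianReal 0 v) i0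


lemma map_inner_gaussian' {d : ℕ} (hd : 0 < d) (v : ℝ≥0) (hv : v ≠ 0)
    (y : EuclideanSpace ℝ (Fin d)) (hy : y ≠ 0) :
    (Measure.pi fun _ : Fin d => gaussianReal 0 v).map
      (fun η : Fin d → ℝ => ⟪(MeasurableEquiv.toLp 2 (Fin d → ℝ)).symm.symm η, y⟫) =
      gaussianReal 0 (⟨‖y‖ ^ 2, sq_nonneg _⟩ * v) := by
  set mE := (MeasurableEquiv.toLp 2 (Fin d → ℝ)).symm.symm with hmE
  have hn : (0:ℝ) < ‖y‖ := norm_pos_iff.2 hy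
  set u : EuclideanSpace ℝ (Fin d) := ‖y‖⁻¹ • y with hu_def
  have hu : ‖u‖ = 1 := by
    rw [hu_def, norm_smul, norm_inv, norm_norm, inv_mul_cancel₀ hn.ne']
  have hinner_meas : Measurable fun η : Fin d → ℝ => (⟪mE η, u⟫ : ℝ) :=
    ((continuous_id.inner continuous_const).measurable).comp mE.measurable
  have hsplit : (fun η : Fin d → ℝ => (⟪mE η, y⟫ : ℝ))
      = (fun t : ℝ => ‖y‖ * t) ∘ (fun η => (⟪mE η, u⟫ : ℝ)) := by
    funext η
    show (⟪mE η, y⟫ : ℝ) = ‖y‖ * ⟪mE η, u⟫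
    rw [hu_def, inner_smul_right]
    field_simp
  rw [hsplit, ← Measure.map_map (measurable_const_mul ‖y‖) hinner_meas,
    map_inner_gaussian hd v hv u hu]
  have := gaussianReal_map_const_mul (μ := 0) (v := v) ‖y‖
  rw [mul_zero] at this
  rw [show (fun t : ℝ => ‖y‖ * t) = (‖y‖ * ·) from rfl, this]
  rfl

lemma gaussianReal_Ioi_lt {a : ℝ} (ha : 0 < a) {v₁ v₂ : ℝ≥0} (hv₂ : v₂ ≠ 0) (h : v₂ < v₁) :
    gaussianReal 0 v₁ (Set.Ioi (-a)) < gaussianReal 0 v₂ (Set.Ioi (-a)) := by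
  have hv₁ : v₁ ≠ 0 := (hv₂.bot_lt.trans h).ne'
  have key : ∀ (v : ℝ≥0), v ≠ 0 → gaussianReal 0 v (Set.Ioi (-a)) =
      gaussianReal 0 1 (Set.Ioi (-(a / Real.sqrt v))) := by
    intro v hv
    have hvpos : (0:ℝ) < (v:ℝ) := NNReal.coe_pos.2 (pos_iff_ne_zero.2 hv)
    have hsp : (0:ℝ) < Real.sqrt v := Real.sqrt_pos.2 hvpos
    have h1 : (⟨(Real.sqrt v)^2, sq_nonneg _⟩ : ℝ≥0) * 1 = v := by
      ext
      simp [Real.sq_sqrt (v.coe_nonneg)]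
    have hmap := gaussianReal_map_const_mul (μ := 0) (v := 1) (Real.sqrt v)
    rw [mul_zero, show (NNReal.mk (Real.sqrt v ^ 2) (sq_nonneg _) * 1 : ℝ≥0) = v by
      ext; simp [Real.sq_sqrt (v.coe_nonneg)]] at hmap
    rw [← hmap, Measure.map_apply (measurable_const_mul _) measurableSet_Ioi]
    congr 1
    ext x
    simp only [Set.mem_preimage, Set.mem_Ioi]
    rw [← neg_div, div_lt_iff₀ hsp, mul_comm]
  rw [key v₁ hv₁, key v₂ hv₂]
  have hsp₁ : (0:ℝ) < Real.sqrt v₁ :=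
    Real.sqrt_pos.2 (NNReal.coe_pos.2 (pos_iff_ne_zero.2 hv₁))
  have hsp₂ : (0:ℝ) < Real.sqrt v₂ :=
    Real.sqrt_pos.2 (NNReal.coe_pos.2 (pos_iff_ne_zero.2 hv₂))
  have hlt : -(a / Real.sqrt v₂) < -(a / Real.sqrt v₁) := by
    rw [neg_lt_neg_iff]
    exact div_lt_div_of_pos_left ha hsp₂
      (Real.sqrt_lt_sqrt v₂.coe_nonneg (NNReal.coe_lt_coe.2 h))
  have hsplit : Set.Ioi (-(a / Real.sqrt v₂)) =
      Set.Ioc (-(a / Real.sqrt v₂)) (-(a / Real.sqrt v₁)) ∪ Set.Ioi (-(a / Real.sqrt v₁)) :=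
    (Set.Ioc_union_Ioi_eq_Ioi hlt.le).symm
  have hne : gaussianReal 0 1
      (Set.Ioc (-(a / Real.sqrt v₂)) (-(a / Real.sqrt v₁))) ≠ 0 := by
    intro h0
    have h2 := (gaussianReal_absolutelyContinuous' 0 one_ne_zero) h0
    rw [Real.volume_Ioc, ENNReal.ofReal_eq_zero] at h2
    linarith
  calc gaussianReal 0 1 (Set.Ioi (-(a / Real.sqrt v₁)))
      < gaussianReal 0 1 (Set.Ioi (-(a / Real.sqrt v₁))) + gaussianReal 0 1
          (Set.Ioc (-(a / Real.sqrt v₂)) (-(a / Real.sqrt v₁))) :=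
        ENNReal.lt_add_right (measure_ne_top _ _) hne
    _ = gaussianReal 0 1
          (Set.Ioc (-(a / Real.sqrt v₂)) (-(a / Real.sqrt v₁))) +
        gaussianReal 0 1 (Set.Ioi (-(a / Real.sqrt v₁))) := add_comm _ _
    _ = gaussianReal 0 1 (Set.Ioi (-(a / Real.sqrt v₂))) := by
        rw [hsplit, measure_union (Set.Ioc_disjoint_Ioi le_rfl) measurableSet_Ioi]

end GapAux

theorem gap_translation_increases_robustness
    (d : ℕ) (hd : 0 < d) (s : ℝ≥0) (hs : 0 < s)
    (P : Measure (Fin d → ℝ))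
    (hP : P = Measure.pi fun _ : Fin d => gaussianReal 0 (s ^ 2))
    (w y g : EuclideanSpace ℝ (Fin d))
    (hwy : 0 < ⟪w, y⟫) (hwg : ⟪w, g⟫ = 0)
    (hyg : y + g ≠ 0) (hnorm : ‖y + g‖ < ‖y‖) :
    P {η : Fin d → ℝ | 0 < ⟪w + (EuclideanSpace.equiv (Fin d) ℝ).symm η, y⟫}
      < P {η : Fin d → ℝ | 0 < ⟪w + (EuclideanSpace.equiv (Fin d) ℝ).symm η, y + g⟫} := by
  subst hP
  set mE := (MeasurableEquiv.toLp 2 (Fin d → ℝ)).symm.symm with hmE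
  set a : ℝ := ⟪w, y⟫ with ha_def
  have hy : y ≠ 0 := by
    intro h
    rw [h, norm_zero] at hnorm
    exact absurd hnorm (not_lt.2 (norm_nonneg _))
  have ha2 : (⟪w, y + g⟫ : ℝ) = a := by rw [inner_add_right, hwg, add_zero]
  have hs2 : (s ^ 2 : ℝ≥0) ≠ 0 := pow_ne_zero 2 hs.ne'
  have hgen : ∀ z : EuclideanSpace ℝ (Fin d), z ≠ 0 → (⟪w, z⟫ : ℝ) = a →
      (Measure.pi fun _ : Fin d => gaussianReal 0 (s ^ 2))
        {η : Fin d → ℝ | 0 < ⟪w + (EuclideanSpace.equiv (Fin d) ℝ).symm η, z⟫}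
        = gaussianReal 0 (⟨‖z‖ ^ 2, sq_nonneg _⟩ * s ^ 2) (Set.Ioi (-a)) := by
    intro z hz hwz
    have hm : Measurable fun η : Fin d → ℝ => (⟪mE η, z⟫ : ℝ) :=
      ((continuous_id.inner continuous_const).measurable).comp mE.measurable
    have hset : {η : Fin d → ℝ | 0 < ⟪w + (EuclideanSpace.equiv (Fin d) ℝ).symm η, z⟫}
        = (fun η : Fin d → ℝ => (⟪mE η, z⟫ : ℝ)) ⁻¹' Set.Ioi (-a) := by
      ext η
      simp only [Set.mem_setOf_eq, Set.mem_preimage, Set.mem_Ioi]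
      rw [show ((EuclideanSpace.equiv (Fin d) ℝ).symm η : EuclideanSpace ℝ (Fin d))
          = mE η from rfl]
      rw [inner_add_left, hwz]
      constructor <;> intro h' <;> linarith
    rw [hset, ← Measure.map_apply hm measurableSet_Ioi]
    rw [hmE, GapAux.map_inner_gaussian' hd (s ^ 2) hs2 z hz]
  rw [hgen y hy rfl, hgen (y + g) hyg ha2]
  have h1 : ((⟨‖y + g‖ ^ 2, sq_nonneg _⟩ : ℝ≥0)) ≠ 0 := by
    intro h0
    have h2 := congrArg NNReal.toReal h0
    change ‖y + g‖ ^ 2 = 0 at h2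
    exact hyg (norm_eq_zero.1 (pow_eq_zero_iff two_ne_zero |>.1 h2))
  refine GapAux.gaussianReal_Ioi_lt hwy (mul_ne_zero h1 hs2) ?_
  refine mul_lt_mul_of_pos_right ?_ (pos_iff_ne_zero.2 hs2)
  show ‖y + g‖ ^ 2 < ‖y‖ ^ 2
  exact pow_lt_pow_left₀ hnorm (norm_nonneg _) two_ne_zero
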